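/- Fix d ∈ [−1,1) and β > 0. Then the Lyapunov function V_l is positive definite on ℝ²: V_l(0,0) = 0 and V_l(z₁,z₂) > 0 for every (z₁,z₂) ∈ ℝ²∖{(0,0)}. -/

import Mathlib

/-- The Lyapunov function `V_l` of the second-order homogeneous differentiator. -/
noncomputable def Vl (d β z1 z2 : ℝ) : ℝ :=
  ((1 - d) / (2 - d)) * |z1| ^ ((2 - d) / (1 - d)) - z1 * z2
    + ((1 + β) / (2 - d)) * |z2| ^ (2 - d)

/-- For `d ∈ [-1,1)` and `β > 0`, the Lyapunov function `V_l` is positive definite: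
`V_l(0,0) = 0` and `V_l(z) > 0` for all `z ≠ 0`. -/
theorem stmt5 (d β : ℝ) (hd : d ∈ Set.Ico (-1:ℝ) 1) (hβ : 0 < β) :
    Vl d β 0 0 = 0 ∧
    ∀ z1 z2 : ℝ, (z1, z2) ≠ ((0:ℝ), (0:ℝ)) → 0 < Vl d β z1 z2 := by
  obtain ⟨hd1, hd2⟩ := hd
  have h1d : (0:ℝ) < 1 - d := by linarith
  have h2d : (0:ℝ) < 2 - d := by linarith
  have hp1 : 1 < (2 - d) / (1 - d) := by
    rw [lt_div_iff₀ h1d]; linarith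
  have hpq : Real.HolderConjugate ((2 - d) / (1 - d)) (2 - d) := by
    constructor
    · rw [inv_div, inv_one, ← one_div, ← add_div, div_eq_one_iff_eq h2d.ne']
      ring
    · linarith
    · exact h2d
  have hc1 : Vl d β 0 0 = 0 := by
    simp [Vl, Real.zero_rpow (by positivity : (2 - d) / (1 - d) ≠ 0),
      Real.zero_rpow (by positivity : (2 - d) ≠ 0)]
  refine ⟨hc1, fun z1 z2 hz => ?_⟩
  have hy := Real.young_inequality z1 z2 hpq
  have hdiv : |z1| ^ ((2 - d) / (1 - d)) / ((2 - d) / (1 - d))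
      = ((1 - d) / (2 - d)) * |z1| ^ ((2 - d) / (1 - d)) := by
    field_simp
  rw [hdiv] at hy
  by_cases hz2 : z2 = 0
  · subst hz2
    have hz1 : z1 ≠ 0 := by
      intro h; exact hz (by simp [h])
    have : 0 < |z1| ^ ((2 - d) / (1 - d)) :=
      Real.rpow_pos_of_pos (abs_pos.mpr hz1) _
    have hx2 : |(0:ℝ)| ^ (2 - d) = 0 := by
      simp [Real.zero_rpow (by positivity : (2 - d) ≠ 0)]
    simp only [Vl, mul_zero, hx2]
    have ha : 0 < (1 - d) / (2 - d) := by positivity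
    nlinarith
  · have hx2 : 0 < |z2| ^ (2 - d) := Real.rpow_pos_of_pos (abs_pos.mpr hz2) _
    have key : Vl d β z1 z2 ≥ (β / (2 - d)) * |z2| ^ (2 - d) := by
      have : (1 + β) / (2 - d) = 1 / (2 - d) + β / (2 - d) := by ring
      simp only [Vl]
      have h2 : |z2| ^ (2 - d) / (2 - d) = (1 / (2 - d)) * |z2| ^ (2 - d) := by ring
      rw [h2] at hy
      nlinarith
    have : 0 < (β / (2 - d)) * |z2| ^ (2 - d) := by positivity
    linarith
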